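/- arXiv:1012.0671 — 3 statements merged into one kernel-verified Lean document; each statement's English description precedes it below -/
import Mathlib

section
/- Fix an integer t ≥ 2. A positive integer n is a champion of the function x ↦ Ψ_t(x)/x (meaning Ψ_t(m)/m ≤ Ψ_t(n)/n for every integer m with 1 ≤ m ≤ n) if and only if n is a multiple of the largest primorial number N_k satisfying N_k ≤ n. In particular the primorial numbers and their multiples are exactly the champion numbers of x ↦ Ψ_t(x)/x. -/
open Finset Filter

/-- Generalized Dedekind psi function `Ψ_t(n) = n ∏_{p ∣ n} (1 + 1/p + ⋯ + 1/p^(t-1))`. -/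
noncomputable def Psi (t n : ℕ) : ℝ :=
  (n : ℝ) * ∏ p ∈ n.primeFactors, ∑ i ∈ Finset.range t, (1 : ℝ) / (p : ℝ) ^ i

/-- The primorial `N_n = ∏_{k=1}^n p_k`, the product of the first `n` primes. -/
noncomputable def primorialAt (n : ℕ) : ℕ := ∏ k ∈ Finset.range n, Nat.nth Nat.Prime k

/-- The `n`-th prime `p_n` (so `nthPrime 1 = 2`). -/
noncomputable def nthPrime (n : ℕ) : ℕ := Nat.nth Nat.Prime (n - 1)

/-- The ratio `R_t(x) = Ψ_t(x) / (x log log x)`. -/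
noncomputable def Rt (t n : ℕ) : ℝ := Psi t n / ((n : ℝ) * Real.log (Real.log n))

/-- The Riemann zeta value `ζ(t) = ∑_{n ≥ 1} n^{-t}` at an integer argument. -/
noncomputable def zetaNat (t : ℕ) : ℝ := ∑' k : ℕ, 1 / ((k : ℝ) + 1) ^ t

/-! ### Auxiliary material -/

/-- The local factor of `Ψ_t` at `p`. -/
noncomputable def ff (t p : ℕ) : ℝ := ∑ i ∈ Finset.range t, (1 : ℝ) / (p : ℝ) ^ i

lemma ff_one_le (t p : ℕ) (ht : 1 ≤ t) : 1 ≤ ff t p := by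
  have h0 : (0 : ℕ) ∈ Finset.range t := Finset.mem_range.2 ht
  have := Finset.single_le_sum (f := fun i => (1 : ℝ) / (p : ℝ) ^ i)
    (fun i _ => by positivity) h0
  simpa [ff] using this

lemma ff_pos (t p : ℕ) (ht : 1 ≤ t) : 0 < ff t p :=
  lt_of_lt_of_le one_pos (ff_one_le t p ht)

lemma one_lt_ff (t p : ℕ) (ht : 2 ≤ t) (hp : 2 ≤ p) : 1 < ff t p := by
  have hpp : (0:ℝ) < (p:ℝ) := by exact_mod_cast Nat.lt_of_lt_of_le (by norm_num) hp
  have key : ∑ i ∈ ({0, 1} : Finset ℕ), (1:ℝ) / (p:ℝ) ^ i ≤ ff t p := by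
    apply Finset.sum_le_sum_of_subset_of_nonneg
    · intro x hx
      simp only [Finset.mem_insert, Finset.mem_singleton] at hx
      rcases hx with h | h <;> simp [h, Finset.mem_range] <;> omega
    · intro i _ _; positivity
  have hval : ∑ i ∈ ({0, 1} : Finset ℕ), (1:ℝ) / (p:ℝ) ^ i = 1 + 1 / (p:ℝ) := by
    norm_num
  have hpos : (0:ℝ) < 1 / (p:ℝ) := by positivity
  rw [hval] at key
  linarith

lemma ff_anti (t p q : ℕ) (hp : 1 ≤ p) (hpq : p ≤ q) : ff t q ≤ ff t p := by
  apply Finset.sum_le_sum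
  intro i _
  apply one_div_le_one_div_of_le
  · have : (0:ℝ) < (p:ℝ) := by exact_mod_cast hp
    positivity
  · exact pow_le_pow_left₀ (by positivity) (by exact_mod_cast hpq) i

lemma ff_strict_anti (t p q : ℕ) (ht : 2 ≤ t) (hp : 1 ≤ p) (hpq : p < q) :
    ff t q < ff t p := by
  apply Finset.sum_lt_sum
  · intro i _
    apply one_div_le_one_div_of_le
    · have : (0:ℝ) < (p:ℝ) := by exact_mod_cast hp
      positivity
    · exact pow_le_pow_left₀ (by positivity) (by exact_mod_cast hpq.le) i
  · refine ⟨1, Finset.mem_range.2 ht, ?_⟩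
    apply one_div_lt_one_div_of_lt
    · have : (0:ℝ) < (p:ℝ) := by exact_mod_cast hp
      simpa using this
    · have : (p:ℝ) < (q:ℝ) := by exact_mod_cast hpq
      simpa using this

lemma image_orderEmbOfFin (S : Finset ℕ) {k : ℕ} (h : S.card = k) :
    Finset.image (S.orderEmbOfFin h) Finset.univ = S := by
  ext x
  rw [Finset.mem_image]
  constructor
  · rintro ⟨j, -, rfl⟩; exact S.orderEmbOfFin_mem h j
  · intro hx
    have : x ∈ Set.range (S.orderEmbOfFin h) := by
      rw [Finset.range_orderEmbOfFin]; exact hx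
    obtain ⟨j, rfl⟩ := this
    exact ⟨j, Finset.mem_univ j, rfl⟩

lemma prod_eq_prod_orderEmb {M : Type*} [CommMonoid M] (S : Finset ℕ) {k : ℕ}
    (h : S.card = k) (g : ℕ → M) :
    ∏ p ∈ S, g p = ∏ j : Fin k, g (S.orderEmbOfFin h j) := by
  have key : ∏ x ∈ Finset.image (fun j : Fin k => S.orderEmbOfFin h j) Finset.univ, g x =
      ∏ j : Fin k, g (S.orderEmbOfFin h j) :=
    Finset.prod_image (fun x _ y _ hxy => (S.orderEmbOfFin h).injective hxy)
  rw [show Finset.image (fun j : Fin k => S.orderEmbOfFin h j) Finset.univ = S from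
    image_orderEmbOfFin S h] at key
  exact key

/-- The `i`-th smallest element of a finite set of primes is at least the `i`-th prime. -/
lemma nth_le_orderEmb (S : Finset ℕ) (hS : ∀ p ∈ S, p.Prime) {k : ℕ} (h : S.card = k)
    (i : Fin k) :
    Nat.nth Nat.Prime i ≤ S.orderEmbOfFin h i := by
  set e := S.orderEmbOfFin h with he
  have hq : (e i).Prime := hS _ (S.orderEmbOfFin_mem h i)
  have hcount : (i : ℕ) ≤ Nat.count Nat.Prime (e i) := by
    rw [Nat.count_eq_card_filter_range]
    have inj : Function.Injective (fun j : Fin (i : ℕ) => e (Fin.castLE i.isLt.le j)) := by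
      intro a b hab
      exact Fin.castLE_injective _ (e.injective hab)
    calc (i : ℕ) = (Finset.univ.image
          (fun j : Fin (i : ℕ) => e (Fin.castLE i.isLt.le j))).card := by
          rw [Finset.card_image_of_injective _ inj, Finset.card_univ, Fintype.card_fin]
      _ ≤ _ := by
          apply Finset.card_le_card
          intro x hx
          obtain ⟨j, -, rfl⟩ := Finset.mem_image.1 hx
          have hlt : e (Fin.castLE i.isLt.le j) < e i := by
            apply e.strictMono
            exact j.isLt
          simp only [Finset.mem_filter, Finset.mem_range]
          exact ⟨hlt, hS _ (S.orderEmbOfFin_mem h _)⟩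
  calc Nat.nth Nat.Prime i ≤ Nat.nth Nat.Prime (Nat.count Nat.Prime (e i)) :=
        (Nat.nth_le_nth Nat.infinite_setOf_prime).2 hcount
    _ = e i := Nat.nth_count hq

lemma primorial_card_le_prod (S : Finset ℕ) (hS : ∀ p ∈ S, p.Prime) :
    primorialAt S.card ≤ ∏ p ∈ S, p :=
  calc primorialAt S.card = ∏ j ∈ Finset.range S.card, Nat.nth Nat.Prime j := rfl
    _ ≤ ∏ j : Fin S.card, S.orderEmbOfFin rfl j := by
        rw [← Fin.prod_univ_eq_prod_range]
        exact Finset.prod_le_prod' fun i _ => nth_le_orderEmb S hS rfl i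
    _ = ∏ p ∈ S, p := (prod_eq_prod_orderEmb S rfl (fun p => p)).symm

lemma primorialAt_mono : Monotone primorialAt := fun a b h =>
  Finset.prod_le_prod_of_subset_of_one_le' (Finset.range_subset_range.2 h)
    (fun i _ _ => (Nat.prime_nth_prime i).one_lt.le)

lemma primorialAt_pos (k : ℕ) : 0 < primorialAt k :=
  Finset.prod_pos fun i _ => (Nat.prime_nth_prime i).pos

lemma lt_primorialAt_self (n : ℕ) : n < primorialAt n := by
  have h1 : 2 ^ n ≤ primorialAt n := by
    rw [primorialAt]
    calc 2 ^ n = ∏ _k ∈ Finset.range n, 2 := by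
          rw [Finset.prod_const, Finset.card_range]
      _ ≤ _ := Finset.prod_le_prod' fun i _ => (Nat.prime_nth_prime i).two_le
  exact lt_of_lt_of_le (Nat.lt_two_pow_self) h1

lemma card_primeFactors_le (m k : ℕ) (hm : m ≠ 0) (h : m < primorialAt (k + 1)) :
    m.primeFactors.card ≤ k := by
  by_contra h'
  push_neg at h'
  have h1 : primorialAt (k + 1) ≤ primorialAt m.primeFactors.card := primorialAt_mono h'
  have h2 : primorialAt m.primeFactors.card ≤ ∏ p ∈ m.primeFactors, p :=
    primorial_card_le_prod _ (fun p hp => Nat.prime_of_mem_primeFactors hp)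
  have h3 : ∏ p ∈ m.primeFactors, p ≤ m :=
    Nat.le_of_dvd (Nat.pos_of_ne_zero hm) (Nat.prod_primeFactors_dvd m)
  omega

lemma prod_ff_le_prod_nth (t : ℕ) (ht : 2 ≤ t) (S : Finset ℕ) (hS : ∀ p ∈ S, p.Prime) :
    ∏ p ∈ S, ff t p ≤ ∏ j ∈ Finset.range S.card, ff t (Nat.nth Nat.Prime j) := by
  rw [prod_eq_prod_orderEmb S rfl (ff t), ← Fin.prod_univ_eq_prod_range]
  apply Finset.prod_le_prod
  · intro i _; exact (ff_pos t _ (by omega)).le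
  · intro i _
    exact ff_anti t _ _ (Nat.prime_nth_prime i).one_le (nth_le_orderEmb S hS rfl i)

lemma prod_nth_ff_mono (t : ℕ) (ht : 2 ≤ t) {s k : ℕ} (h : s ≤ k) :
    ∏ j ∈ Finset.range s, ff t (Nat.nth Nat.Prime j) ≤
      ∏ j ∈ Finset.range k, ff t (Nat.nth Nat.Prime j) := by
  rw [← Finset.prod_range_mul_prod_Ico (fun j => ff t (Nat.nth Nat.Prime j)) h]
  have hb : (1:ℝ) ≤ ∏ j ∈ Finset.Ico s k, ff t (Nat.nth Nat.Prime j) := by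
    have h0 : ∏ _j ∈ Finset.Ico s k, (1:ℝ) ≤ ∏ j ∈ Finset.Ico s k, ff t (Nat.nth Nat.Prime j) :=
      Finset.prod_le_prod (fun i _ => by norm_num) (fun i _ => ff_one_le t _ (by omega))
    simpa using h0
  have ha : (0:ℝ) ≤ ∏ j ∈ Finset.range s, ff t (Nat.nth Nat.Prime j) :=
    (Finset.prod_pos fun i _ => ff_pos t _ (by omega)).le
  exact le_mul_of_one_le_right ha hb

lemma prod_ff_lt_of_ne (t : ℕ) (ht : 2 ≤ t) (S : Finset ℕ) (hS : ∀ p ∈ S, p.Prime)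
    (k : ℕ) (hcard : S.card ≤ k)
    (hne : S ≠ (Finset.range k).image (Nat.nth Nat.Prime)) :
    ∏ p ∈ S, ff t p < ∏ j ∈ Finset.range k, ff t (Nat.nth Nat.Prime j) := by
  rcases lt_or_eq_of_le hcard with hlt | heq
  · refine lt_of_le_of_lt (prod_ff_le_prod_nth t ht S hS) ?_
    rw [← Finset.prod_range_mul_prod_Ico (fun j => ff t (Nat.nth Nat.Prime j)) hlt.le]
    have hb : 1 < ∏ j ∈ Finset.Ico S.card k, ff t (Nat.nth Nat.Prime j) := by
      have h0 : ∏ _j ∈ Finset.Ico S.card k, (1:ℝ) <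
          ∏ j ∈ Finset.Ico S.card k, ff t (Nat.nth Nat.Prime j) :=
        Finset.prod_lt_prod_of_nonempty (fun i _ => one_pos)
          (fun i _ => one_lt_ff t _ ht (Nat.prime_nth_prime i).two_le)
          (by rw [Finset.nonempty_Ico]; exact hlt)
      simpa using h0
    have ha : 0 < ∏ j ∈ Finset.range S.card, ff t (Nat.nth Nat.Prime j) :=
      Finset.prod_pos fun i _ => ff_pos t _ (by omega)
    nlinarith
  · set e := S.orderEmbOfFin heq with he
    by_cases hall : ∀ i : Fin k, e i = Nat.nth Nat.Prime i
    · exfalso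
      apply hne
      ext x
      rw [Finset.mem_image]
      constructor
      · intro hx
        have : x ∈ Set.range e := by rw [he, Finset.range_orderEmbOfFin]; exact hx
        obtain ⟨j, rfl⟩ := this
        exact ⟨j, Finset.mem_range.2 j.isLt, (hall j).symm⟩
      · rintro ⟨j, hj, rfl⟩
        rw [← hall ⟨j, Finset.mem_range.1 hj⟩]
        exact S.orderEmbOfFin_mem heq _
    · push_neg at hall
      obtain ⟨i, hi⟩ := hall
      rw [prod_eq_prod_orderEmb S heq (ff t), ← Fin.prod_univ_eq_prod_range]
      apply Finset.prod_lt_prod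
      · intro j _; exact ff_pos t _ (by omega)
      · intro j _
        exact ff_anti t _ _ (Nat.prime_nth_prime _).one_le (nth_le_orderEmb S hS heq j)
      · refine ⟨i, Finset.mem_univ _, ?_⟩
        have h1 : Nat.nth Nat.Prime i < e i :=
          lt_of_le_of_ne (nth_le_orderEmb S hS heq i) (Ne.symm hi)
        exact ff_strict_anti t _ _ ht (Nat.prime_nth_prime _).one_le h1

lemma primorialAt_eq_prod_image (k : ℕ) :
    primorialAt k = ∏ p ∈ (Finset.range k).image (Nat.nth Nat.Prime), p := by
  rw [Finset.prod_image
    (fun x _ y _ h => Nat.nth_injective Nat.infinite_setOf_prime h)]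
  rfl

lemma primeFactors_primorialAt (k : ℕ) :
    (primorialAt k).primeFactors = (Finset.range k).image (Nat.nth Nat.Prime) := by
  rw [primorialAt_eq_prod_image]
  apply Nat.primeFactors_prod
  intro p hp
  obtain ⟨j, -, rfl⟩ := Finset.mem_image.1 hp
  exact Nat.prime_nth_prime j

lemma Psi_div_eq (t m : ℕ) (hm : m ≠ 0) :
    Psi t m / (m : ℝ) = ∏ p ∈ m.primeFactors, ff t p := by
  rw [Psi, mul_div_cancel_left₀ _ (by exact_mod_cast hm : (m : ℝ) ≠ 0)]
  rfl

theorem champion_iff_multiple_of_largest_primorial (t : ℕ) (ht : 2 ≤ t) (n : ℕ) (hn : 1 ≤ n) :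
    (∀ m : ℕ, 1 ≤ m → m ≤ n → Psi t m / (m : ℝ) ≤ Psi t n / (n : ℝ)) ↔
      ∃ k : ℕ, primorialAt k ≤ n ∧ n < primorialAt (k + 1) ∧ primorialAt k ∣ n := by
  have hn0 : n ≠ 0 := by omega
  -- the largest `k` with `primorialAt k ≤ n`
  set k := Nat.findGreatest (fun k => primorialAt k ≤ n) n with hkdef
  have hP0 : primorialAt 0 ≤ n := by simpa [primorialAt] using hn
  have hk1 : primorialAt k ≤ n := Nat.findGreatest_spec (P := fun k => primorialAt k ≤ n) (Nat.zero_le n) hP0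
  have hkn : k < n := by
    by_contra h
    push_neg at h
    have h2 := primorialAt_mono h
    have h3 := lt_primorialAt_self n
    omega
  have hk2 : n < primorialAt (k + 1) := by
    by_contra h
    push_neg at h
    exact Nat.findGreatest_is_greatest (Nat.lt_succ_self k) (by omega) h
  have hcardn : n.primeFactors.card ≤ k := card_primeFactors_le n k hn0 hk2
  have hprimesS : ∀ p ∈ n.primeFactors, p.Prime := fun p hp => Nat.prime_of_mem_primeFactors hp
  constructor
  · intro hch
    refine ⟨k, hk1, hk2, ?_⟩
    have hSeq : n.primeFactors = (Finset.range k).image (Nat.nth Nat.Prime) := by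
      by_contra hne
      have hlt := prod_ff_lt_of_ne t ht n.primeFactors hprimesS k hcardn hne
      have hch' := hch (primorialAt k) (primorialAt_pos k) hk1
      rw [Psi_div_eq t _ (primorialAt_pos k).ne', Psi_div_eq t n hn0,
        primeFactors_primorialAt k] at hch'
      have heqprod : ∏ p ∈ (Finset.range k).image (Nat.nth Nat.Prime), ff t p =
          ∏ j ∈ Finset.range k, ff t (Nat.nth Nat.Prime j) :=
        Finset.prod_image (fun x _ y _ h => Nat.nth_injective Nat.infinite_setOf_prime h)
      rw [heqprod] at hch'
      exact absurd hch' (not_le.2 hlt)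
    have hkey : primorialAt k = ∏ p ∈ n.primeFactors, p := by
      rw [hSeq, ← primorialAt_eq_prod_image]
    rw [hkey]
    exact Nat.prod_primeFactors_dvd n
  · rintro ⟨k', hk1', hk2', hdvd⟩ m hm1 hmn
    have hm0 : m ≠ 0 := by omega
    have hSeq : n.primeFactors = (Finset.range k').image (Nat.nth Nat.Prime) := by
      symm
      apply Finset.eq_of_subset_of_card_le
      · intro p hp
        obtain ⟨j, hj, rfl⟩ := Finset.mem_image.1 hp
        refine Nat.mem_primeFactors.2 ⟨Nat.prime_nth_prime j, ?_, hn0⟩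
        exact dvd_trans (Finset.dvd_prod_of_mem _ hj) hdvd
      · have hc1 : n.primeFactors.card ≤ k' := card_primeFactors_le n k' hn0 hk2'
        have hc2 : ((Finset.range k').image (Nat.nth Nat.Prime)).card = k' := by
          rw [Finset.card_image_of_injective _ (Nat.nth_injective Nat.infinite_setOf_prime),
            Finset.card_range]
        omega
    rw [Psi_div_eq t m hm0, Psi_div_eq t n hn0, hSeq,
      Finset.prod_image (fun x _ y _ h => Nat.nth_injective Nat.infinite_setOf_prime h)]
    have hcm : m.primeFactors.card ≤ k' :=
      card_primeFactors_le m k' hm0 (lt_of_le_of_lt (by exact_mod_cast hmn) hk2')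
    calc ∏ p ∈ m.primeFactors, ff t p
        ≤ ∏ j ∈ Finset.range m.primeFactors.card, ff t (Nat.nth Nat.Prime j) :=
          prod_ff_le_prod_nth t ht _ (fun p hp => Nat.prime_of_mem_primeFactors hp)
      _ ≤ ∏ j ∈ Finset.range k', ff t (Nat.nth Nat.Prime j) := prod_nth_ff_mono t ht hcm
end

section
/- Fix an integer t ≥ 2 and let n ≥ 1. For every integer m with 1 ≤ m < N_{n+1} one has Ψ_t(m)/m ≤ Ψ_t(N_n)/N_n, with equality if and only if N_n divides m. -/
open Finset Filter

namespace PsiAux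

noncomputable def f (t p : ℕ) : ℝ := ∑ i ∈ Finset.range t, (1 : ℝ) / (p : ℝ) ^ i

lemma f_pos {t p : ℕ} (ht : 1 ≤ t) (hp : 1 ≤ p) : 0 < f t p := by
  have h0 : (0:ℝ) < 1 / (p:ℝ) ^ 0 := by norm_num
  exact Finset.sum_pos' (fun i _ => by positivity)
    ⟨0, Finset.mem_range.2 (by omega), h0⟩

lemma one_lt_f {t p : ℕ} (ht : 2 ≤ t) (hp : 2 ≤ p) : 1 < f t p := by
  have h2 : ∑ i ∈ Finset.range 2, (1 : ℝ) / (p : ℝ) ^ i ≤ f t p :=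
    Finset.sum_le_sum_of_subset_of_nonneg (Finset.range_subset_range.2 ht)
      (fun i _ _ => by positivity)
  have h1 : (1:ℝ) < ∑ i ∈ Finset.range 2, (1 : ℝ) / (p : ℝ) ^ i := by
    rw [Finset.sum_range_succ, Finset.sum_range_one]
    have : (0:ℝ) < 1 / (p:ℝ)^1 := by positivity
    simpa using this
  linarith

lemma f_le_f {t p q : ℕ} (hp : 1 ≤ p) (hpq : p ≤ q) : f t q ≤ f t p := by
  apply Finset.sum_le_sum
  intro i _
  gcongr

lemma f_lt_f {t p q : ℕ} (ht : 2 ≤ t) (hp : 1 ≤ p) (hpq : p < q) : f t q < f t p := by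
  apply Finset.sum_lt_sum
  · intro i _; gcongr
  · refine ⟨1, Finset.mem_range.2 (by omega), ?_⟩
    have h1 : (1:ℝ) ≤ (p:ℝ) := by exact_mod_cast hp
    have h2 : (p:ℝ) < (q:ℝ) := by exact_mod_cast hpq
    gcongr

lemma infp : {p | Nat.Prime p}.Infinite := Nat.infinite_setOf_prime

lemma prime_nth (k : ℕ) : Nat.Prime (Nat.nth Nat.Prime k) :=
  Nat.nth_mem_of_infinite infp k

/-- The i-th smallest element of a finset of primes is at least the i-th prime. -/
lemma nth_le_orderEmb (S : Finset ℕ) (hS : ∀ p ∈ S, p.Prime) (i : Fin S.card) :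
    Nat.nth Nat.Prime i ≤ S.orderEmbOfFin rfl i := by
  set x := S.orderEmbOfFin rfl i with hx
  have hxp : Nat.Prime x := hS _ (Finset.orderEmbOfFin_mem S rfl i)
  have hcount : (i:ℕ) ≤ Nat.count Nat.Prime x := by
    rw [Nat.count_eq_card_filter_range]
    have := Finset.card_le_card_of_injOn
      (f := fun j : Fin i => S.orderEmbOfFin rfl ⟨j, j.2.trans i.2⟩)
      (s := Finset.univ) (t := {y ∈ Finset.range x | Nat.Prime y})
      (fun j _ => by
        refine Finset.mem_filter.2 ⟨Finset.mem_range.2 ?_, hS _ (Finset.orderEmbOfFin_mem S rfl _)⟩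
        exact (S.orderEmbOfFin rfl).strictMono (show (⟨j, j.2.trans i.2⟩ : Fin S.card) < i from j.2))
      (fun a _ b _ hab => by
        have := (S.orderEmbOfFin rfl).injective hab
        have h : (a:ℕ) = (b:ℕ) := by simpa using this
        exact Fin.ext h)
    simpa using this
  calc Nat.nth Nat.Prime i ≤ Nat.nth Nat.Prime (Nat.count Nat.Prime x) :=
        (Nat.nth_le_nth infp).2 hcount
    _ = x := Nat.nth_count hxp



lemma prod_fin {M : Type*} [CommMonoid M] (S : Finset ℕ) (g : ℕ → M) :
    ∏ p ∈ S, g p = ∏ i : Fin S.card, g (S.orderEmbOfFin rfl i) := by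
  rw [← Finset.prod_coe_sort S g,
    ← Equiv.prod_comp (S.orderIsoOfFin rfl).toEquiv (fun x => g (x : ℕ))]
  exact Finset.prod_congr rfl fun i _ => by
    rw [RelIso.coe_fn_toEquiv, Finset.coe_orderIsoOfFin_apply]

lemma primorial_le_prod (S : Finset ℕ) (hS : ∀ p ∈ S, p.Prime) :
    ∏ k ∈ Finset.range S.card, Nat.nth Nat.Prime k ≤ ∏ p ∈ S, p := by
  rw [prod_fin S (fun p => p), ← Fin.prod_univ_eq_prod_range (fun k => Nat.nth Nat.Prime k) S.card]
  exact Finset.prod_le_prod' fun i _ => nth_le_orderEmb S hS i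

lemma one_le_prod_real {s : Finset ℕ} {g : ℕ → ℝ} (h : ∀ i ∈ s, 1 ≤ g i) :
    1 ≤ ∏ i ∈ s, g i := by
  calc (1:ℝ) = ∏ i ∈ s, 1 := by simp
    _ ≤ ∏ i ∈ s, g i := Finset.prod_le_prod (by simp) h

lemma prod_range_f_mono {t : ℕ} (ht : 2 ≤ t) {a b : ℕ} (hab : a ≤ b) :
    ∏ k ∈ Finset.range a, f t (Nat.nth Nat.Prime k) ≤
      ∏ k ∈ Finset.range b, f t (Nat.nth Nat.Prime k) := by
  rw [← Finset.prod_range_mul_prod_Ico (fun k => f t (Nat.nth Nat.Prime k)) hab]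
  have h1 : (1:ℝ) ≤ ∏ k ∈ Finset.Ico a b, f t (Nat.nth Nat.Prime k) :=
    one_le_prod_real fun k _ => (one_lt_f ht (prime_nth k).two_le).le
  have h0 : (0:ℝ) ≤ ∏ k ∈ Finset.range a, f t (Nat.nth Nat.Prime k) :=
    (Finset.prod_pos fun k _ => f_pos (by omega) (prime_nth k).one_lt.le).le
  exact le_mul_of_one_le_right h0 h1

lemma prod_f_le {t : ℕ} (ht : 2 ≤ t) (S : Finset ℕ) (hS : ∀ p ∈ S, p.Prime) {n : ℕ}
    (hcard : S.card ≤ n) :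
    ∏ p ∈ S, f t p ≤ ∏ k ∈ Finset.range n, f t (Nat.nth Nat.Prime k) := by
  have ht1 : 1 ≤ t := by omega
  calc ∏ p ∈ S, f t p = ∏ i : Fin S.card, f t (S.orderEmbOfFin rfl i) :=
        prod_fin S (fun p => f t p)
    _ ≤ ∏ i : Fin S.card, f t (Nat.nth Nat.Prime i) := by
        refine Finset.prod_le_prod (fun i _ => (f_pos ht1 ?_).le) (fun i _ => ?_)
        · exact (hS _ (Finset.orderEmbOfFin_mem S rfl i)).one_lt.le
        · exact f_le_f (prime_nth i).one_lt.le (nth_le_orderEmb S hS i)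
    _ = ∏ k ∈ Finset.range S.card, f t (Nat.nth Nat.Prime k) :=
        Fin.prod_univ_eq_prod_range (fun k => f t (Nat.nth Nat.Prime k)) S.card
    _ ≤ ∏ k ∈ Finset.range n, f t (Nat.nth Nat.Prime k) := prod_range_f_mono ht hcard

lemma prod_f_lt {t : ℕ} (ht : 2 ≤ t) (S : Finset ℕ) (hS : ∀ p ∈ S, p.Prime) {n : ℕ}
    (hcard : S.card ≤ n) (hne : S ≠ (Finset.range n).image (Nat.nth Nat.Prime)) :
    ∏ p ∈ S, f t p < ∏ k ∈ Finset.range n, f t (Nat.nth Nat.Prime k) := by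
  have ht1 : 1 ≤ t := by omega
  rcases lt_or_eq_of_le hcard with hlt | heq
  · calc ∏ p ∈ S, f t p ≤ ∏ k ∈ Finset.range S.card, f t (Nat.nth Nat.Prime k) :=
          prod_f_le ht S hS le_rfl
      _ < (∏ k ∈ Finset.range S.card, f t (Nat.nth Nat.Prime k)) * f t (Nat.nth Nat.Prime S.card) := by
          have hpos : 0 < ∏ k ∈ Finset.range S.card, f t (Nat.nth Nat.Prime k) :=
            Finset.prod_pos fun k _ => f_pos ht1 (prime_nth k).one_lt.le
          nlinarith [one_lt_f ht (prime_nth S.card).two_le]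
      _ = ∏ k ∈ Finset.range (S.card + 1), f t (Nat.nth Nat.Prime k) :=
          (Finset.prod_range_succ _ _).symm
      _ ≤ ∏ k ∈ Finset.range n, f t (Nat.nth Nat.Prime k) := prod_range_f_mono ht (by omega)
  · -- S.card = n, and some element differs
    have hex : ∃ i : Fin S.card, (S.orderEmbOfFin rfl i : ℕ) ≠ Nat.nth Nat.Prime i := by
      by_contra hall
      push_neg at hall
      apply hne
      ext p
      simp only [Finset.mem_image, Finset.mem_range]
      constructor
      · intro hp
        have : p ∈ Set.range (S.orderEmbOfFin rfl) := by
          rw [Finset.range_orderEmbOfFin]; exact hp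
        obtain ⟨i, hi⟩ := this
        exact ⟨i, heq ▸ i.2, by rw [← hall i, hi]⟩
      · rintro ⟨k, hk, rfl⟩
        have hk' : k < S.card := by omega
        have := hall ⟨k, hk'⟩
        simp only at this
        rw [← this]
        exact Finset.orderEmbOfFin_mem S rfl _
    obtain ⟨i, hi⟩ := hex
    have hstrict : Nat.nth Nat.Prime i < S.orderEmbOfFin rfl i :=
      lt_of_le_of_ne (nth_le_orderEmb S hS i) (Ne.symm hi)
    calc ∏ p ∈ S, f t p = ∏ i : Fin S.card, f t (S.orderEmbOfFin rfl i) := prod_fin S (fun p => f t p)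
      _ < ∏ i : Fin S.card, f t (Nat.nth Nat.Prime i) := by
          refine Finset.prod_lt_prod (fun j _ => f_pos ht1 ?_)
            (fun j _ => f_le_f (prime_nth j).one_lt.le (nth_le_orderEmb S hS j))
            ⟨i, Finset.mem_univ i, f_lt_f ht (prime_nth i).one_lt.le hstrict⟩
          exact (hS _ (Finset.orderEmbOfFin_mem S rfl j)).one_lt.le
      _ = ∏ k ∈ Finset.range S.card, f t (Nat.nth Nat.Prime k) :=
          Fin.prod_univ_eq_prod_range (fun k => f t (Nat.nth Nat.Prime k)) S.card
      _ = ∏ k ∈ Finset.range n, f t (Nat.nth Nat.Prime k) := by rw [heq]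

end PsiAux


theorem psi_ratio_le_primorial (t n : ℕ) (ht : 2 ≤ t) (hn : 1 ≤ n)
    (m : ℕ) (hm1 : 1 ≤ m) (hm2 : m < primorialAt (n + 1)) :
    Psi t m / (m : ℝ) ≤ Psi t (primorialAt n) / (primorialAt n : ℝ) ∧
      (Psi t m / (m : ℝ) = Psi t (primorialAt n) / (primorialAt n : ℝ) ↔ primorialAt n ∣ m) := by
  classical
  set S := m.primeFactors with hSdef
  have hSprime : ∀ p ∈ S, p.Prime := fun p hp => Nat.prime_of_mem_primeFactors hp
  have hm0 : m ≠ 0 := by omega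
  have hradical : ∏ p ∈ S, p ∣ m := Nat.prod_primeFactors_dvd m
  have hrad_le : ∏ p ∈ S, p ≤ m := Nat.le_of_dvd (by omega) hradical
  have hScard : S.card ≤ n := by
    by_contra hc
    push_neg at hc
    have h1 : primorialAt (n+1) ≤ ∏ k ∈ Finset.range S.card, Nat.nth Nat.Prime k := by
      unfold primorialAt
      apply Finset.prod_le_prod_of_subset_of_one_le' (Finset.range_subset_range.2 (by omega))
      intro k _ _; exact (PsiAux.prime_nth k).one_lt.le
    have h2 := PsiAux.primorial_le_prod S hSprime
    omega
  set T := (Finset.range n).image (Nat.nth Nat.Prime) with hTdef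
  have hinj : ∀ a ∈ Finset.range n, ∀ b ∈ Finset.range n,
      Nat.nth Nat.Prime a = Nat.nth Nat.Prime b → a = b :=
    fun a _ b _ h => Nat.nth_injective PsiAux.infp h
  have hTcard : T.card = n := by
    rw [hTdef, Finset.card_image_of_injective _ (Nat.nth_injective PsiAux.infp),
      Finset.card_range]
  have hTprime : ∀ p ∈ T, p.Prime := by
    intro p hp
    obtain ⟨k, _, rfl⟩ := Finset.mem_image.1 hp
    exact PsiAux.prime_nth k
  have hNT : primorialAt n = ∏ p ∈ T, p := by
    rw [hTdef, Finset.prod_image hinj]; rfl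
  have hNpos : 0 < primorialAt n := Finset.prod_pos fun k _ => (PsiAux.prime_nth k).pos
  have hpfN : (primorialAt n).primeFactors = T := by
    rw [hNT]; exact Nat.primeFactors_prod hTprime
  have hratio : ∀ k : ℕ, k ≠ 0 → Psi t k / k = ∏ p ∈ k.primeFactors, PsiAux.f t p := by
    intro k hk
    unfold Psi PsiAux.f
    rw [mul_div_cancel_left₀ _ (show (k:ℝ) ≠ 0 from Nat.cast_ne_zero.2 hk)]
  have hRm : Psi t m / m = ∏ p ∈ S, PsiAux.f t p := hratio m hm0
  have hRN : Psi t (primorialAt n) / (primorialAt n) =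
      ∏ k ∈ Finset.range n, PsiAux.f t (Nat.nth Nat.Prime k) := by
    rw [hratio _ hNpos.ne', hpfN, hTdef, Finset.prod_image hinj]
  have hdvd_iff : primorialAt n ∣ m ↔ T ⊆ S := by
    constructor
    · intro hd p hp
      exact Nat.mem_primeFactors.2
        ⟨hTprime p hp, dvd_trans (hNT ▸ Finset.dvd_prod_of_mem _ hp) hd, hm0⟩
    · intro hsub
      rw [hNT]
      exact dvd_trans (Finset.prod_dvd_prod_of_subset _ _ _ hsub) hradical
  by_cases hd : primorialAt n ∣ m
  · have hsub : T ⊆ S := hdvd_iff.1 hd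
    have hST : T = S := Finset.eq_of_subset_of_card_le hsub (by omega)
    have heq : Psi t m / m = Psi t (primorialAt n) / (primorialAt n) := by
      rw [hRm, hRN, ← hST, hTdef, Finset.prod_image hinj]
    exact ⟨heq.le, ⟨fun _ => hd, fun _ => heq⟩⟩
  · have hne : S ≠ T := fun h => hd (hdvd_iff.2 (by rw [← h]))
    have hlt : Psi t m / m < Psi t (primorialAt n) / (primorialAt n) := by
      rw [hRm, hRN]
      exact PsiAux.prod_f_lt ht S hSprime hScard hne
    exact ⟨hlt.le, ⟨fun h => absurd h hlt.ne, fun h => absurd h hd⟩⟩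
end

section
/- Fix an integer t ≥ 2 and let n ≥ 2. Then ∏_{p prime, p > p_n} (1 − 1/p^t)^{-1} ≤ exp(2/p_n), where p_n denotes the n-th prime and the product on the left is the (convergent) infinite product over all primes exceeding p_n. -/
open Finset Filter

private lemma telescope_hasSum (k : ℕ) (hk : 0 < k) :
    HasSum (fun j : ℕ => 1 / ((k : ℝ) + j) - 1 / ((k : ℝ) + j + 1)) (1 / (k : ℝ)) := by
  have hpos : ∀ j : ℕ, (0:ℝ) < (k : ℝ) + j := fun j => by positivity
  have hnn : ∀ j : ℕ, 0 ≤ 1 / ((k : ℝ) + j) - 1 / ((k : ℝ) + j + 1) := by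
    intro j
    have := hpos j
    rw [sub_nonneg]
    apply one_div_le_one_div_of_le this (by linarith)
  rw [hasSum_iff_tendsto_nat_of_nonneg hnn]
  have heq : ∀ N : ℕ, ∑ j ∈ Finset.range N, (1 / ((k : ℝ) + j) - 1 / ((k : ℝ) + j + 1))
      = 1 / (k : ℝ) - 1 / ((k : ℝ) + N) := by
    intro N
    have := Finset.sum_range_sub' (fun j : ℕ => 1 / ((k : ℝ) + j)) N
    simp only [Nat.cast_zero, add_zero, Nat.cast_add, Nat.cast_one] at this ⊢
    rw [← this]
    congr 1
    ext j
    ring_nf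
  simp_rw [heq]
  have : Tendsto (fun N : ℕ => 1 / ((k : ℝ) + N)) atTop (nhds 0) := by
    simp only [one_div]
    apply Tendsto.comp tendsto_inv_atTop_zero
    exact tendsto_atTop_add_const_left _ _ tendsto_natCast_atTop_atTop
  simpa using Tendsto.sub tendsto_const_nhds this

private lemma log_inv_le (x : ℝ) (hx0 : 0 ≤ x) (hx : x ≤ 1/2) :
    Real.log (1 - x)⁻¹ ≤ 2 * x := by
  have h1 : (0:ℝ) < 1 - x := by linarith
  have h2 : Real.log (1 - x)⁻¹ ≤ (1 - x)⁻¹ - 1 :=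
    Real.log_le_sub_one_of_pos (by positivity)
  have h3 : (1 - x)⁻¹ ≤ 1 + 2 * x := by
    rw [inv_le_iff_one_le_mul₀ h1]
    nlinarith
  linarith

theorem tail_euler_product_le (t n : ℕ) (ht : 2 ≤ t) (hn : 2 ≤ n) :
    ∏' p : {p : ℕ // p.Prime ∧ nthPrime n < p}, (1 - 1 / ((p : ℕ) : ℝ) ^ t)⁻¹ ≤
      Real.exp (2 / (nthPrime n : ℝ)) := by
  set k := nthPrime n with hk
  have hk2 : 2 ≤ k := (Nat.prime_nth_prime (n - 1)).two_le
  have hk0 : (0:ℝ) < (k:ℝ) := by positivity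
  set S := {p : ℕ // p.Prime ∧ k < p}
  -- basic facts about elements of S
  have hple : ∀ p : S, (k:ℕ) + 1 ≤ (p:ℕ) := fun p => p.2.2
  have hx_bound : ∀ p : S, 1 / ((p:ℕ):ℝ) ^ t ≤ 1/4 := by
    intro p
    have h2p : (2:ℝ) ≤ ((p:ℕ):ℝ) := by exact_mod_cast p.2.1.two_le
    have h4 : (4:ℝ) ≤ ((p:ℕ):ℝ) ^ t := by
      calc (4:ℝ) = 2 ^ 2 := by norm_num
      _ ≤ ((p:ℕ):ℝ) ^ 2 := pow_le_pow_left₀ (by norm_num) h2p 2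
      _ ≤ ((p:ℕ):ℝ) ^ t := pow_le_pow_right₀ (by linarith) ht
    rw [div_le_div_iff₀ (by positivity) (by norm_num)]
    linarith
  have hx_pos : ∀ p : S, (0:ℝ) < 1 / ((p:ℕ):ℝ) ^ t := by
    intro p
    have : (0:ℝ) < ((p:ℕ):ℝ) := by exact_mod_cast p.2.1.pos
    positivity
  have hfac_pos : ∀ p : S, (0:ℝ) < (1 - 1 / ((p:ℕ):ℝ) ^ t)⁻¹ := by
    intro p
    have := hx_bound p
    have := hx_pos p
    rw [inv_pos]
    linarith
  -- summability of 1/p^t over S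
  have hsum_nat : Summable (fun m : ℕ => 1 / (m:ℝ) ^ t) :=
    Real.summable_one_div_nat_pow.mpr (by omega)
  have hsumS : Summable (fun p : S => 1 / ((p:ℕ):ℝ) ^ t) :=
    hsum_nat.comp_injective Subtype.coe_injective
  -- summability of logs
  have hlog_nonneg : ∀ p : S, 0 ≤ Real.log (1 - 1 / ((p:ℕ):ℝ) ^ t)⁻¹ := by
    intro p
    apply Real.log_nonneg
    have h1 := hx_pos p
    have h2 := hx_bound p
    have h3 : (0:ℝ) < 1 - 1 / ((p:ℕ):ℝ) ^ t := by linarith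
    have := inv_anti₀ h3 (by linarith : 1 - 1 / ((p:ℕ):ℝ) ^ t ≤ 1)
    simpa using this
  have hlog_le : ∀ p : S, Real.log (1 - 1 / ((p:ℕ):ℝ) ^ t)⁻¹ ≤ 2 * (1 / ((p:ℕ):ℝ) ^ t) :=
    fun p => log_inv_le _ (hx_pos p).le (by linarith [hx_bound p])
  have hsumlog : Summable (fun p : S => Real.log (1 - 1 / ((p:ℕ):ℝ) ^ t)⁻¹) :=
    Summable.of_nonneg_of_le hlog_nonneg hlog_le (hsumS.mul_left 2)
  -- product equals exp of sum of logs
  have hprod : ∏' p : S, (1 - 1 / ((p:ℕ):ℝ) ^ t)⁻¹ =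
      Real.exp (∑' p : S, Real.log (1 - 1 / ((p:ℕ):ℝ) ^ t)⁻¹) := by
    have := Real.rexp_tsum_eq_tprod
      (f := fun p : S => (1 - 1 / ((p:ℕ):ℝ) ^ t)⁻¹)
      (fun p => hfac_pos p) hsumlog
    exact this.symm
  rw [hprod, Real.exp_le_exp]
  -- bound the tail sum of 1/p^t by telescoping
  have htel := telescope_hasSum k (by omega)
  have htail : (∑' p : S, 1 / ((p:ℕ):ℝ) ^ t) ≤ 1 / (k:ℝ) := by
    rw [← htel.tsum_eq]
    apply Summable.tsum_le_tsum_of_inj (fun p : S => (p:ℕ) - (k + 1))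
    · intro p q hpq
      have h1 := hple p
      have h2 := hple q
      apply Subtype.ext
      dsimp only at hpq
      omega
    · intro c _
      have : (0:ℝ) < (k:ℝ) + c := by positivity
      rw [sub_nonneg]
      apply one_div_le_one_div_of_le this (by linarith)
    · intro p
      have h1 := hple p
      have hcast : ((((p:ℕ) - (k+1) : ℕ)):ℝ) = ((p:ℕ):ℝ) - ((k:ℝ) + 1) := by
        push_cast [Nat.cast_sub h1]
        ring
      rw [hcast]
      have hp3 : (3:ℝ) ≤ ((p:ℕ):ℝ) := by
        have : k + 1 ≤ (p:ℕ) := hple p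
        have : 3 ≤ (p:ℕ) := by omega
        exact_mod_cast this
      have hA : (k:ℝ) + (((p:ℕ):ℝ) - ((k:ℝ) + 1)) = ((p:ℕ):ℝ) - 1 := by ring
      rw [hA]
      have hsub : 1 / (((p:ℕ):ℝ) - 1) - 1 / (((p:ℕ):ℝ) - 1 + 1) =
          1 / ((((p:ℕ):ℝ) - 1) * ((p:ℕ):ℝ)) := by
        have hne1 : (((p:ℕ):ℝ) - 1) ≠ 0 := by linarith
        have hne : ((p:ℕ):ℝ) ≠ 0 := by linarith
        rw [sub_add_cancel]
        field_simp
        ring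
      rw [hsub]
      apply one_div_le_one_div_of_le (by nlinarith)
      calc (((p:ℕ):ℝ) - 1) * ((p:ℕ):ℝ) ≤ ((p:ℕ):ℝ) ^ 2 := by nlinarith
      _ ≤ ((p:ℕ):ℝ) ^ t := pow_le_pow_right₀ (by linarith) ht
    · exact hsumS
    · exact htel.summable
  calc (∑' p : S, Real.log (1 - 1 / ((p:ℕ):ℝ) ^ t)⁻¹)
      ≤ ∑' p : S, 2 * (1 / ((p:ℕ):ℝ) ^ t) :=
        Summable.tsum_le_tsum hlog_le hsumlog (hsumS.mul_left 2)
    _ = 2 * ∑' p : S, 1 / ((p:ℕ):ℝ) ^ t := tsum_mul_left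
    _ ≤ 2 * (1 / (k:ℝ)) := by linarith [htail]
    _ = 2 / (k:ℝ) := by ring
end
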